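/- Let G and H be two nonempty subsets of a metric space (E,σ) such that G and H are complete, (G,H) has property strongly UC, and G ∩ H ≠ ∅. Let T be an almost cyclic ψ-contraction on G ∪ H. Then T has a unique fixed point z in G ∩ H, and for any u₀ ∈ G ∩ H the sequence defined by u_{n+1} = T u_n converges to z. -/

import Mathlib

open Metric Filter Set

/-- Distance between two sets: `σ(G,H) = inf {σ(u,v) : u ∈ G, v ∈ H}`. -/
noncomputable def setDist {E : Type*} [MetricSpace E] (G H : Set E) : ℝ :=
  sInf (Set.image2 dist G H)

/-- The pair `(G,H)` has property UC. -/
def PropUC {E : Type*} [MetricSpace E] (G H : Set E) : Prop :=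
  ∀ u z v : ℕ → E, (∀ n, u n ∈ G) → (∀ n, z n ∈ G) → (∀ n, v n ∈ H) →
    Tendsto (fun n => dist (u n) (v n)) atTop (nhds (setDist G H)) →
    Tendsto (fun n => dist (z n) (v n)) atTop (nhds (setDist G H)) →
    Tendsto (fun n => dist (u n) (z n)) atTop (nhds 0)

/-- The pair `(G,H)` has property strongly UC. -/
def PropSUC {E : Type*} [MetricSpace E] (G H : Set E) : Prop :=
  ∀ u z v : ℕ → E, (∀ n, u n ∈ G) → (∀ n, z n ∈ G) → (∀ n, v n ∈ H) →
    Tendsto (fun n => dist (u n) (v n) - Metric.infDist (v n) G) atTop (nhds 0) →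
    Tendsto (fun n => dist (z n) (v n) - Metric.infDist (v n) G) atTop (nhds 0) →
    Tendsto (fun n => dist (u n) (z n)) atTop (nhds 0)

/-- `ψ : [0,∞) → [0,∞)` is strictly increasing and continuous. -/
structure PsiMap (ψ : ℝ → ℝ) : Prop where
  nonneg : ∀ t, 0 ≤ t → 0 ≤ ψ t
  strictMono : StrictMonoOn ψ (Set.Ici 0)
  continuous : ContinuousOn ψ (Set.Ici 0)

/-- `T` is an almost cyclic `ψ`-contraction on `G ∪ H`: it is cyclic and
`σ(Tx,Ty) ≤ σ(x,y) − ψ(σ(x,y)) + ψ(σ(y,G))` for all `x ∈ G`, `y ∈ H`. -/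
def AlmostCyclicPsiContraction {E : Type*} [MetricSpace E] (G H : Set E) (T : E → E)
    (ψ : ℝ → ℝ) : Prop :=
  Set.MapsTo T G H ∧ Set.MapsTo T H G ∧
    ∀ x ∈ G, ∀ y ∈ H,
      dist (T x) (T y) ≤ dist x y - ψ (dist x y) + ψ (Metric.infDist y G)

/-- If `G` and `H` are complete, `(G,H)` has property strongly UC, `G ∩ H ≠ ∅`, and
`T` is an almost cyclic ψ-contraction on `G ∪ H`, then `T` has a unique fixed point
`z ∈ G ∩ H`, and for every `u₀ ∈ G ∩ H` the Picard iterates `T^[n] u₀` converge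
to `z`. -/
theorem psi_zero_le {ψ : ℝ → ℝ} (hψ : PsiMap ψ) {t : ℝ} (ht : 0 ≤ t) : ψ 0 ≤ ψ t :=
  hψ.strictMono.monotoneOn (Set.mem_Ici.mpr le_rfl) (Set.mem_Ici.mpr ht) ht

theorem psi_le_of_le {ψ : ℝ → ℝ} (hψ : PsiMap ψ) {s t : ℝ} (hs : 0 ≤ s) (hst : s ≤ t) :
    ψ s ≤ ψ t :=
  hψ.strictMono.monotoneOn (Set.mem_Ici.mpr hs) (Set.mem_Ici.mpr (hs.trans hst)) hst

theorem aux_tendsto {ψ : ℝ → ℝ} (hψ : PsiMap ψ) (a : ℕ → ℝ)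
    (ha0 : ∀ n, 0 ≤ a n) (hrec : ∀ n, a (n + 1) ≤ a n - (ψ (a n) - ψ 0)) :
    Tendsto a atTop (nhds 0) := by
  have hstep : ∀ n, a (n + 1) ≤ a n := fun n => by
    have h1 := psi_zero_le hψ (ha0 n); have := hrec n; linarith
  have hanti : Antitone a := antitone_nat_of_succ_le hstep
  have key : ∀ ε : ℝ, 0 < ε → ∃ N, a N < ε := by
    intro ε hε
    by_contra h
    push_neg at h
    have hc : 0 < ψ ε - ψ 0 := by
      have := hψ.strictMono (Set.mem_Ici.mpr le_rfl) (Set.mem_Ici.mpr hε.le) hε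
      linarith
    set c := ψ ε - ψ 0 with hcdef
    have hdec : ∀ n : ℕ, a n ≤ a 0 - n * c := by
      intro n
      induction n with
      | zero => simp
      | succ n ih =>
        have h1 : ψ ε ≤ ψ (a n) := psi_le_of_le hψ hε.le (h n)
        have := hrec n
        push_cast
        nlinarith
    obtain ⟨n, hn⟩ := exists_nat_gt ((a 0 - ε) / c)
    have h2 : (a 0 - ε) / c * c < n * c := mul_lt_mul_of_pos_right hn hc
    rw [div_mul_cancel₀ _ hc.ne'] at h2
    have := hdec n
    have := h n
    linarith
  rw [Metric.tendsto_atTop]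
  intro ε hε
  obtain ⟨N, hN⟩ := key ε hε
  exact ⟨N, fun n hn => by
    rw [Real.dist_eq, sub_zero, abs_of_nonneg (ha0 n)]
    exact lt_of_le_of_lt (hanti hn) hN⟩

theorem fixedPoint_exists_unique {E : Type*} [MetricSpace E]
    (G H : Set E) (hG : G.Nonempty) (hH : H.Nonempty)
    (hGcomp : IsComplete G) (hHcomp : IsComplete H)
    (hSUC : PropSUC G H) (hGH : (G ∩ H).Nonempty)
    (ψ : ℝ → ℝ) (hψ : PsiMap ψ) (T : E → E)
    (hT : AlmostCyclicPsiContraction G H T ψ) :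
    ∃ z ∈ G ∩ H, T z = z ∧ (∀ y ∈ G ∩ H, T y = y → y = z) ∧
      ∀ u₀ ∈ G ∩ H, Tendsto (fun n => T^[n] u₀) atTop (nhds z) := by
  set K := G ∩ H with hKdef
  -- T maps K into K
  have hTK : ∀ x ∈ K, T x ∈ K := fun x hx => ⟨hT.2.1 hx.2, hT.1 hx.1⟩
  -- the contraction inequality on K
  have hcontr : ∀ x ∈ K, ∀ y ∈ K,
      dist (T x) (T y) ≤ dist x y - (ψ (dist x y) - ψ 0) := by
    intro x hx y hy
    have h := hT.2.2 x hx.1 y hy.2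
    rw [Metric.infDist_zero_of_mem hy.1] at h
    linarith
  have hnonexp : ∀ x ∈ K, ∀ y ∈ K, dist (T x) (T y) ≤ dist x y := by
    intro x hx y hy
    have := hcontr x hx y hy
    have := psi_zero_le hψ (dist_nonneg (x := x) (y := y))
    linarith
  -- orbits stay in K
  have horb : ∀ u₀ ∈ K, ∀ n, T^[n] u₀ ∈ K := by
    intro u₀ hu₀ n
    induction n with
    | zero => simpa using hu₀
    | succ n ih => rw [Function.iterate_succ_apply']; exact hTK _ ih
  -- distance to a fixed point (or successive distances) tends to 0
  have hfixconv : ∀ z ∈ K, T z = z → ∀ u₀ ∈ K,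
      Tendsto (fun n => T^[n] u₀) atTop (nhds z) := by
    intro z hz hfz u₀ hu₀
    have hrec : ∀ n, dist (T^[n + 1] u₀) z ≤ dist (T^[n] u₀) z -
        (ψ (dist (T^[n] u₀) z) - ψ 0) := by
      intro n
      rw [Function.iterate_succ_apply']
      calc dist (T (T^[n] u₀)) z = dist (T (T^[n] u₀)) (T z) := by rw [hfz]
        _ ≤ _ := hcontr _ (horb u₀ hu₀ n) z hz
    have := aux_tendsto hψ (fun n => dist (T^[n] u₀) z) (fun n => dist_nonneg) hrec
    exact tendsto_iff_dist_tendsto_zero.mpr this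
  -- uniqueness helper
  have huniq : ∀ y ∈ K, ∀ z ∈ K, T y = y → T z = z → y = z := by
    intro y hy z hz hfy hfz
    have h := hcontr y hy z hz
    rw [hfy, hfz] at h
    have h0 : ψ (dist y z) ≤ ψ 0 := by linarith
    by_contra hne
    have hd : 0 < dist y z := dist_pos.mpr hne
    have := hψ.strictMono (Set.mem_Ici.mpr le_rfl) (Set.mem_Ici.mpr hd.le) hd
    linarith
  -- existence: Picard iteration from a point of K
  obtain ⟨u₀, hu₀⟩ := hGH
  set x : ℕ → E := fun n => T^[n] u₀ with hxdef
  have hxK : ∀ n, x n ∈ K := horb u₀ hu₀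
  have hd : ∀ n, dist (x (n + 1)) (x (n + 2)) ≤ dist (x n) (x (n + 1)) -
      (ψ (dist (x n) (x (n + 1))) - ψ 0) := by
    intro n
    have : x (n + 1) = T (x n) := Function.iterate_succ_apply' T n u₀
    have h2 : x (n + 2) = T (x (n + 1)) := Function.iterate_succ_apply' T (n + 1) u₀
    rw [this, h2, this]
    exact hcontr _ (hxK n) _ (by rw [← this]; exact hxK (n + 1))
  have hd0 : Tendsto (fun n => dist (x n) (x (n + 1))) atTop (nhds 0) :=
    aux_tendsto hψ _ (fun n => dist_nonneg) hd
  -- the orbit is Cauchy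
  have hcauchy : CauchySeq x := by
    rw [Metric.cauchySeq_iff']
    intro ε hε
    have hε4 : (0:ℝ) < ε / 4 := by linarith
    have hc : 0 < ψ (ε / 4) - ψ 0 := by
      have := hψ.strictMono (Set.mem_Ici.mpr le_rfl) (Set.mem_Ici.mpr hε4.le) hε4
      linarith
    rw [Metric.tendsto_atTop] at hd0
    obtain ⟨N, hN⟩ := hd0 (min (ε / 4) (ψ (ε / 4) - ψ 0)) (lt_min hε4 hc)
    have hdN : dist (x N) (x (N + 1)) < min (ε / 4) (ψ (ε / 4) - ψ 0) := by
      have := hN N le_rfl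
      rwa [Real.dist_eq, sub_zero, abs_of_nonneg dist_nonneg] at this
    refine ⟨N, fun n hn => ?_⟩
    have claim : ∀ m, N ≤ m → dist (x m) (x N) ≤ ε / 2 := by
      intro m hm
      induction m, hm using Nat.le_induction with
      | base => simp; linarith
      | succ m hm ih =>
        have hstep : x (m + 1) = T (x m) := Function.iterate_succ_apply' T m u₀
        have hstepN : x (N + 1) = T (x N) := Function.iterate_succ_apply' T N u₀
        have h1 : dist (x (m + 1)) (x N) ≤ dist (T (x m)) (T (x N)) +
            dist (x (N + 1)) (x N) := by
          rw [hstep, ← hstepN]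
          exact dist_triangle _ _ _
        have h2 := hcontr _ (hxK m) _ (hxK N)
        have hdN1 : dist (x (N + 1)) (x N) < min (ε / 4) (ψ (ε / 4) - ψ 0) := by
          rw [dist_comm]; exact hdN
        rcases le_or_gt (dist (x m) (x N)) (ε / 4) with hcase | hcase
        · have hψ0 := psi_zero_le hψ (dist_nonneg (x := x m) (y := x N))
          have := min_le_left (ε / 4) (ψ (ε / 4) - ψ 0)
          linarith
        · have hψε : ψ (ε / 4) ≤ ψ (dist (x m) (x N)) :=
            psi_le_of_le hψ hε4.le hcase.le
          have := min_le_right (ε / 4) (ψ (ε / 4) - ψ 0)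
          linarith
    exact lt_of_le_of_lt (claim n hn) (by linarith)
  -- K is complete
  have hKcomp : IsComplete K := by
    intro f hf hfK
    obtain ⟨z, hzG, hfz⟩ := hGcomp f hf (hfK.trans (principal_mono.mpr inter_subset_left))
    refine ⟨z, ⟨hzG, ?_⟩, hfz⟩
    have hfH : f ≤ 𝓟 H := hfK.trans (principal_mono.mpr inter_subset_right)
    have : z ∈ closure H := by
      haveI := hf.1
      rw [mem_closure_iff_nhdsWithin_neBot]
      exact neBot_of_le (le_inf hfz hfH)
    rwa [hHcomp.isClosed.closure_eq] at this
  obtain ⟨z, hzK, hxz⟩ := cauchySeq_tendsto_of_isComplete hKcomp hxK hcauchy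
  -- z is a fixed point
  have hTz : T z = z := by
    have h1 : Tendsto (fun n => x (n + 1)) atTop (nhds z) :=
      hxz.comp (tendsto_add_atTop_nat 1)
    have h2 : Tendsto (fun n => x (n + 1)) atTop (nhds (T z)) := by
      rw [tendsto_iff_dist_tendsto_zero]
      have hb : ∀ n, dist (x (n + 1)) (T z) ≤ dist (x n) z := by
        intro n
        have hx1 : x (n + 1) = T (x n) := Function.iterate_succ_apply' T n u₀
        rw [hx1]
        exact hnonexp _ (hxK n) z hzK
      have hdz : Tendsto (fun n => dist (x n) z) atTop (nhds 0) :=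
        tendsto_iff_dist_tendsto_zero.mp hxz
      exact squeeze_zero (fun n => dist_nonneg) hb hdz
    exact (tendsto_nhds_unique h2 h1)
  exact ⟨z, hzK, hTz, fun y hy hfy => huniq y hy z hzK hfy hTz, hfixconv z hzK hTz⟩
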